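/- arXiv:1302.3074 — 5 statements merged into one kernel-verified Lean document; each statement's English description precedes it below -/
import Mathlib

section
/- Let h : ℝⁿ → ℝ be coordinatewise separable, h(x) = Σ_{j=1}^n h_j(x_j), with each h_j : ℝ → ℝ convex. Let x, d ∈ ℝⁿ and suppose d = d¹ + … + dˢ where each dᵗ is conformal to d (i.e. supp(dᵗ) ⊆ supp(d) and dᵗ_j d_j ≥ 0 for all j). Then h(x + d) − h(x) ≥ Σ_{t=1}^s (h(x + dᵗ) − h(x)). -/
lemma aux_1d (f : ℝ → ℝ) (hf : ConvexOn ℝ Set.univ f) (a D : ℝ) (s : ℕ)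
    (Dt : Fin s → ℝ) (hsum : D = ∑ t, Dt t)
    (hz : ∀ t, (D = 0 → Dt t = 0) ∧ 0 ≤ Dt t * D) :
    f (a + D) - f a ≥ ∑ t, (f (a + Dt t) - f a) := by
  rcases eq_or_ne D 0 with hD | hD
  · have : ∀ t, Dt t = 0 := fun t => (hz t).1 hD
    simp [hD, this]
  · have hD2 : (0:ℝ) < D ^ 2 := by positivity
    have hlam : ∀ t, 0 ≤ Dt t / D := by
      intro t
      have : Dt t / D = Dt t * D / D ^ 2 := by field_simp
      rw [this]
      exact div_nonneg (hz t).2 hD2.le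
    have hsumlam : ∑ t, Dt t / D = 1 := by
      rw [← Finset.sum_div, ← hsum, div_self hD]
    have key : ∀ t, f (a + Dt t) - f a ≤ (Dt t / D) * (f (a + D) - f a) := by
      intro t
      set l := Dt t / D with hl
      have hl1 : l ≤ 1 := by
        rw [← hsumlam]
        exact Finset.single_le_sum (fun i _ => hlam i) (Finset.mem_univ t)
      have hc := hf.2 (Set.mem_univ a) (Set.mem_univ (a + D))
        (by linarith [hlam t] : (0:ℝ) ≤ 1 - l) (hlam t) (by ring)
      have heq : (1 - l) • a + l • (a + D) = a + Dt t := by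
        simp only [smul_eq_mul]
        have : l * D = Dt t := by rw [hl]; field_simp
        linarith [this]
      rw [heq] at hc
      simp only [smul_eq_mul] at hc
      nlinarith [hc]
    calc ∑ t, (f (a + Dt t) - f a)
        ≤ ∑ t, (Dt t / D) * (f (a + D) - f a) :=
          Finset.sum_le_sum fun t _ => key t
      _ = (∑ t, Dt t / D) * (f (a + D) - f a) := by rw [Finset.sum_mul]
      _ = f (a + D) - f a := by rw [hsumlam, one_mul]

theorem stmt_9 (n : ℕ) (h : Fin n → ℝ → ℝ)
    (hconv : ∀ j, ConvexOn ℝ Set.univ (h j))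
    (x d : Fin n → ℝ) (s : ℕ) (dt : Fin s → Fin n → ℝ)
    (hsum : d = ∑ t, dt t)
    (hconf : ∀ t j, (d j = 0 → dt t j = 0) ∧ 0 ≤ dt t j * d j) :
    (∑ j, h j (x j + d j)) - ∑ j, h j (x j) ≥
      ∑ t, ((∑ j, h j (x j + dt t j)) - ∑ j, h j (x j)) := by
  have key : ∀ j, h j (x j + d j) - h j (x j) ≥
      ∑ t, (h j (x j + dt t j) - h j (x j)) := by
    intro j
    apply aux_1d (h j) (hconv j) (x j) (d j) s (fun t => dt t j)
    · rw [hsum]; simp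
    · exact fun t => hconf t j
  calc ∑ t, ((∑ j, h j (x j + dt t j)) - ∑ j, h j (x j))
      = ∑ j, ∑ t, (h j (x j + dt t j) - h j (x j)) := by
        rw [Finset.sum_comm]
        congr 1; ext t
        rw [Finset.sum_sub_distrib]
    _ ≤ ∑ j, (h j (x j + d j) - h j (x j)) :=
        Finset.sum_le_sum fun j _ => key j
    _ = (∑ j, h j (x j + d j)) - ∑ j, h j (x j) := Finset.sum_sub_distrib _ _
end

section
/- Let a ∈ ℝⁿ with n ≥ 2 and let d ∈ ℝⁿ satisfy ⟨a, d⟩ = 0. Then d can be written as d = Σ_t dᵗ where each dᵗ satisfies ⟨a, dᵗ⟩ = 0, each dᵗ has at most 2 nonzero coordinates, supp(dᵗ) ⊆ supp(d), and dᵗ_j · d_j ≥ 0 for all coordinates j. -/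
open Function

private lemma conf_trans {x y z : ℝ} (hxy : 0 ≤ x * y) (hyz : 0 ≤ y * z) (hy : y ≠ 0) :
    0 ≤ x * z := by
  nlinarith [mul_nonneg hxy hyz, mul_self_pos.mpr hy]

private def Goal (n : ℕ) (a d : Fin n → ℝ) : Prop :=
  ∃ (s : ℕ) (dt : Fin s → Fin n → ℝ),
    d = ∑ t, dt t ∧
    ∀ t, (∑ j, a j * dt t j = 0) ∧
      (Function.support (dt t)).ncard ≤ 2 ∧
      (∀ j, d j = 0 → dt t j = 0) ∧ (∀ j, 0 ≤ dt t j * d j)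

private lemma peel {n m : ℕ} (a d : Fin n → ℝ)
    (hd : ∑ j, a j * d j = 0)
    (hcard : (support d).ncard ≤ m + 1)
    (IH : ∀ a d : Fin n → ℝ, (support d).ncard ≤ m → ∑ j, a j * d j = 0 → Goal n a d)
    (i : Fin n) (hi : d i ≠ 0)
    (v : Fin n → ℝ)
    (hv0 : ∑ j, a j * v j = 0)
    (hv2 : (support v).ncard ≤ 2)
    (hvz : ∀ j, d j = 0 → v j = 0)
    (hvc : ∀ j, 0 ≤ v j * d j)
    (hvr : ∀ j, 0 ≤ (d j - v j) * d j)
    (hvi : d i - v i = 0) : Goal n a d := by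
  set d' : Fin n → ℝ := fun j => d j - v j with hd'
  have hd'z : ∀ j, d j = 0 → d' j = 0 := by
    intro j hj; simp [hd', hj, hvz j hj]
  have hsub : support d' ⊆ support d \ {i} := by
    intro j hj
    simp only [Set.mem_diff, Set.mem_singleton_iff]
    constructor
    · intro hjd; exact hj (hd'z j hjd)
    · rintro rfl; exact hj hvi
  have hcard' : (support d').ncard ≤ m := by
    have h1 : (support d').ncard ≤ (support d \ {i}).ncard :=
      Set.ncard_le_ncard hsub (Set.toFinite _)
    have h2 : (support d \ {i}).ncard = (support d).ncard - 1 :=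
      Set.ncard_diff_singleton_of_mem (Function.mem_support.mpr hi)
    omega
  have hd'0 : ∑ j, a j * d' j = 0 := by
    have : ∑ j, a j * d' j = (∑ j, a j * d j) - ∑ j, a j * v j := by
      rw [← Finset.sum_sub_distrib]; apply Finset.sum_congr rfl; intro j _; ring
    rw [this, hd, hv0, sub_zero]
  obtain ⟨s, dt, hsum, hall⟩ := IH a d' hcard' hd'0
  refine ⟨s + 1, Fin.cons v dt, ?_, ?_⟩
  · rw [Fin.sum_cons, ← hsum]
    funext j; simp [hd']
  · intro t
    refine Fin.cases ?_ ?_ t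
    · simpa using ⟨hv0, hv2, hvz, hvc⟩
    · intro t'
      obtain ⟨h1, h2, h3, h4⟩ := hall t'
      refine ⟨by simpa using h1, by simpa using h2, ?_, ?_⟩
      · intro j hj
        simpa using h3 j (hd'z j hj)
      · intro j
        simp only [Fin.cons_succ]
        by_cases hz : dt t' j = 0
        · simp [hz]
        · have hy : d' j ≠ 0 := fun h => hz (h3 j h)
          exact conf_trans (h4 j) (hvr j) hy

private lemma main_aux (n : ℕ) : ∀ (m : ℕ) (a d : Fin n → ℝ),
    (support d).ncard ≤ m → ∑ j, a j * d j = 0 → Goal n a d := by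
  intro m
  induction m with
  | zero =>
    intro a d hc hd
    refine ⟨1, fun _ => d, by simp, fun t => ⟨hd, le_trans hc (by omega), fun j hj => hj,
      fun j => mul_self_nonneg (d j)⟩⟩
  | succ m IH =>
    intro a d hc hd
    by_cases hsmall : (support d).ncard ≤ 2
    · exact ⟨1, fun _ => d, by simp, fun t => ⟨hd, hsmall, fun j hj => hj,
        fun j => mul_self_nonneg (d j)⟩⟩
    push_neg at hsmall
    have hne : (support d).Nonempty := by
      rw [← Set.ncard_pos (Set.toFinite _)]; omega
    by_cases hex : ∃ i, a i * d i ≠ 0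
    · -- case B
      obtain ⟨i, hci⟩ := hex
      have hdi : d i ≠ 0 := fun h => hci (by simp [h])
      -- find k with opposite sign
      have hk : ∃ k, (a i * d i) * (a k * d k) < 0 := by
        by_contra hcon
        push_neg at hcon
        have hsum0 : ∑ k, (a i * d i) * (a k * d k) = 0 := by
          rw [← Finset.mul_sum, hd, mul_zero]
        have := (Finset.sum_eq_zero_iff_of_nonneg (fun k _ => hcon k)).mp hsum0 i
          (Finset.mem_univ i)
        exact hci (by nlinarith)
      obtain ⟨k, hck⟩ := hk
      have hik : i ≠ k := by
        rintro rfl; nlinarith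
      have hdk : d k ≠ 0 := by
        intro h; rw [h] at hck; simp at hck
      -- construction parametrized by orientation
      have key : ∀ i k : Fin n, i ≠ k → (a i * d i) * (a k * d k) < 0 →
          |a i * d i| ≤ |a k * d k| → Goal n a d := by
        clear hci hdi hck hik hdk i k
        intro i k hik hck hle
        have hdi : d i ≠ 0 := by intro h; rw [h] at hck; simp at hck
        set c := a i * d i with hc'
        set e := a k * d k with he'
        have he : e ≠ 0 := by intro h; rw [h] at hck; simp at hck
        have hrneg : c / e < 0 := by
          rcases mul_neg_iff.mp hck with ⟨h1, h2⟩ | ⟨h1, h2⟩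
          · exact div_neg_of_pos_of_neg h1 h2
          · exact div_neg_of_neg_of_pos h1 h2
        have hrle : -(c / e) ≤ 1 := by
          have habs : |c / e| ≤ 1 := by
            rw [abs_div]
            exact div_le_one_of_le₀ hle (abs_nonneg e)
          calc -(c/e) ≤ |c/e| := neg_le_abs _
            _ ≤ 1 := habs
        set v : Fin n → ℝ :=
          fun j => (if j = i then d j else 0) + (if j = k then (-(c/e)) * d j else 0) with hv'
        have hvik : v i = d i := by simp [hv', hik]
        have hvk : v k = -(c/e) * d k := by simp [hv', hik.symm]
        refine peel a d hd hc IH i hdi v ?_ ?_ ?_ ?_ ?_ ?_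
        · have : ∑ j, a j * v j = a i * d i + a k * (-(c/e) * d k) := by
            simp [hv', mul_add, Finset.sum_add_distrib, mul_ite, Finset.sum_ite_eq']
          rw [this, ← hc']
          have h1 : a k * (-(c/e) * d k) = -(c/e) * e := by rw [he']; ring
          rw [h1]
          field_simp
          ring
        · have hsub2 : support v ⊆ {i, k} := by
            intro j hj
            simp only [mem_support] at hj
            by_contra h
            simp only [Set.mem_insert_iff, Set.mem_singleton_iff, not_or] at h
            simp [hv', h.1, h.2] at hj
          calc (support v).ncard ≤ ({i, k} : Set (Fin n)).ncard :=
                Set.ncard_le_ncard hsub2 (Set.toFinite _)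
            _ ≤ ({k} : Set (Fin n)).ncard + 1 := Set.ncard_insert_le i {k}
            _ ≤ 2 := by rw [Set.ncard_singleton]
        · intro j hj; simp [hv', hj]
        · intro j
          by_cases h1 : j = i
          · subst h1; rw [hvik]; exact mul_self_nonneg _
          by_cases h2 : j = k
          · subst h2; rw [hvk]
            have : 0 ≤ -(c/e) := by linarith
            calc (0:ℝ) = -(c/e) * 0 := by ring
              _ ≤ -(c/e) * (d j * d j) := by
                  exact mul_le_mul_of_nonneg_left (mul_self_nonneg _) this
              _ = -(c/e) * d j * d j := by ring
          · simp [hv', h1, h2]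
        · intro j
          by_cases h1 : j = i
          · subst h1; rw [hvik]; simp
          by_cases h2 : j = k
          · subst h2; rw [hvk]
            have h3 : 0 ≤ 1 + c/e := by linarith
            calc (0:ℝ) = (1 + c/e) * 0 := by ring
              _ ≤ (1 + c/e) * (d j * d j) :=
                  mul_le_mul_of_nonneg_left (mul_self_nonneg _) h3
              _ = (d j - -(c/e) * d j) * d j := by ring
          · simp [hv', h1, h2, mul_self_nonneg]
        · rw [hvik]; ring
      rcases le_total |a i * d i| |a k * d k| with h | h
      · exact key i k hik hck h
      · exact key k i hik.symm (by linarith [mul_comm (a i * d i) (a k * d k)]) h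
    · -- case A
      push_neg at hex
      obtain ⟨i, hi⟩ := hne
      have hdi : d i ≠ 0 := hi
      refine peel a d hd hc IH i hdi (fun j => if j = i then d j else 0) ?_ ?_ ?_ ?_ ?_ ?_
      · simpa [mul_ite, Finset.sum_ite_eq'] using hex i
      · have : support (fun j => if j = i then d j else 0) ⊆ {i} := by
          intro j hj; simp only [mem_support] at hj
          by_contra h; simp only [Set.mem_singleton_iff] at h; simp [h] at hj
        calc (support fun j => if j = i then d j else 0).ncard
            ≤ ({i} : Set (Fin n)).ncard := Set.ncard_le_ncard this (Set.toFinite _)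
          _ = 1 := Set.ncard_singleton i
          _ ≤ 2 := by omega
      · intro j hj; simp [hj]
      · intro j; by_cases h : j = i <;> simp [h, mul_self_nonneg]
      · intro j; by_cases h : j = i <;> simp [h, mul_self_nonneg]
      · simp

theorem stmt_11 (n : ℕ) (hn : 2 ≤ n) (a d : Fin n → ℝ)
    (hd : ∑ j, a j * d j = 0) :
    ∃ (s : ℕ) (dt : Fin s → Fin n → ℝ),
      d = ∑ t, dt t ∧
      ∀ t, (∑ j, a j * dt t j = 0) ∧
        (Function.support (dt t)).ncard ≤ 2 ∧
        (∀ j, d j = 0 → dt t j = 0) ∧ (∀ j, 0 ≤ dt t j * d j) :=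
  main_aux n ((Function.support d).ncard) a d le_rfl hd
end

section
/- Let A ∈ ℝ^{m×n} and d ∈ Null(A) be an elementary vector of Null(A), i.e. there is no nonzero d' ∈ Null(A) conformal to d with supp(d') ≠ supp(d). Then |supp(d)| ≤ rank(A) + 1. -/
theorem stmt_12 (m n : ℕ) (A : Matrix (Fin m) (Fin n) ℝ) (d : Fin n → ℝ)
    (hd : A.mulVec d = 0)
    (helem : ∀ d' : Fin n → ℝ, A.mulVec d' = 0 → d' ≠ 0 →
      (∀ j, d j = 0 → d' j = 0) → (∀ j, 0 ≤ d' j * d j) →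
      Function.support d' = Function.support d) :
    (Function.support d).ncard ≤ A.rank + 1 := by
  classical
  by_contra hlt
  push_neg at hlt
  set S : Set (Fin n) := Function.support d with hS
  -- extension-by-zero linear map
  let Φ : (S → ℝ) →ₗ[ℝ] (Fin n → ℝ) :=
    { toFun := fun x j => if h : j ∈ S then x ⟨j, h⟩ else 0
      map_add' := by
        intro x y; funext j; by_cases h : j ∈ S <;> simp [h]
      map_smul' := by
        intro c x; funext j; by_cases h : j ∈ S <;> simp [h] }
  have hΦ_apply : ∀ (x : S → ℝ) (j : Fin n), Φ x j = if h : j ∈ S then x ⟨j, h⟩ else 0 := by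
    intro x j; rfl
  have hΦ_inj : Function.Injective Φ := by
    intro x y hxy
    funext j
    have := congrFun hxy (j : Fin n)
    simpa [hΦ_apply, j.2] using this
  let L : (S → ℝ) →ₗ[ℝ] (Fin m → ℝ) := A.mulVecLin ∘ₗ Φ
  have hrankL : Module.finrank ℝ (LinearMap.range L) ≤ A.rank := by
    have hle : LinearMap.range L ≤ LinearMap.range A.mulVecLin :=
      LinearMap.range_comp_le_range _ _
    exact Submodule.finrank_mono hle
  have hcardS : Module.finrank ℝ (S → ℝ) = S.ncard := by
    rw [Module.finrank_fintype_fun_eq_card]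
    rw [← Nat.card_eq_fintype_card, Nat.card_coe_set_eq]
  have hrn := LinearMap.finrank_range_add_finrank_ker L
  have hker : 2 ≤ Module.finrank ℝ (LinearMap.ker L) := by
    rw [hcardS] at hrn
    omega
  -- d restricted to S
  let dS : S → ℝ := fun j => d j
  have hΦdS : Φ dS = d := by
    funext j
    by_cases h : j ∈ S
    · simp [hΦ_apply, h, dS]
    · have : d j = 0 := by simpa [hS, Function.mem_support] using h
      simp [hΦ_apply, h, this]
  have hdS_ker : dS ∈ LinearMap.ker L := by
    simp only [LinearMap.mem_ker, L, LinearMap.comp_apply, hΦdS]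
    simpa [Matrix.mulVecLin_apply] using hd
  -- find u in ker not in span of dS
  obtain ⟨u, hu_ker, hu_span⟩ :
      ∃ u, u ∈ LinearMap.ker L ∧ u ∉ Submodule.span ℝ {dS} := by
    by_contra hc
    push_neg at hc
    have hle : LinearMap.ker L ≤ Submodule.span ℝ {dS} := fun x hx => hc x hx
    have hSne : S.Nonempty := by
      apply Set.nonempty_of_ncard_ne_zero
      omega
    obtain ⟨j, hjS⟩ := hSne
    have hdS_ne : dS ≠ 0 := by
      intro h0
      have : d j ≠ 0 := hjS
      exact this (by simpa [dS] using congrFun h0 ⟨j, hjS⟩)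
    have h1 : Module.finrank ℝ (Submodule.span ℝ {dS}) ≤ 1 :=
      le_of_eq (finrank_span_singleton hdS_ne)
    have := Submodule.finrank_mono hle
    omega
  set d'' : Fin n → ℝ := Φ u with hd''def
  have hd''_zero : ∀ j, d j = 0 → d'' j = 0 := by
    intro j hj
    have hjS : j ∉ S := by simp [hS, Function.mem_support, hj]
    simp [hd''def, hΦ_apply, hjS]
  have hd''_ne : d'' ≠ 0 := by
    intro h0
    apply hu_span
    have : u = 0 := hΦ_inj (by simpa [hd''def] using h0)
    simp [this]
  have hAd'' : A.mulVec d'' = 0 := by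
    have := hu_ker
    simpa [LinearMap.mem_ker, L, LinearMap.comp_apply, Matrix.mulVecLin_apply, hd''def] using this
  -- choose j0 minimizing |d j / d'' j| over support of d''
  obtain ⟨j1, hj1⟩ : ∃ j, d'' j ≠ 0 := by
    by_contra hc; push_neg at hc; exact hd''_ne (funext hc)
  have hTne : (Finset.univ.filter (fun j => d'' j ≠ 0)).Nonempty :=
    ⟨j1, by simp [hj1]⟩
  obtain ⟨j0, hj0mem, hj0min⟩ :=
    Finset.exists_min_image (Finset.univ.filter (fun j => d'' j ≠ 0))
      (fun j => |d j / d'' j|) hTne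
  have hj0 : d'' j0 ≠ 0 := by simpa using hj0mem
  have hdj0 : d j0 ≠ 0 := by
    intro h
    exact hj0 (hd''_zero j0 h)
  set lam : ℝ := d j0 / d'' j0 with hlam
  set e : Fin n → ℝ := d - lam • d'' with he
  have hAe : A.mulVec e = 0 := by
    rw [he, Matrix.mulVec_sub, Matrix.mulVec_smul, hd, hAd'']
    simp
  have he_zero : ∀ j, d j = 0 → e j = 0 := by
    intro j hj
    simp [he, hj, hd''_zero j hj]
  have he0 : e j0 = 0 := by
    simp only [he, Pi.sub_apply, Pi.smul_apply, smul_eq_mul, hlam]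
    field_simp
    ring
  have he_ne : e ≠ 0 := by
    intro h0
    have hde : d = lam • d'' := by
      have := congrArg (fun f => f + lam • d'') h0
      simpa [he, sub_add_cancel] using this
    have hlam_ne : lam ≠ 0 := by
      intro h
      rw [h, zero_smul] at hde
      exact hdj0 (by simp [hde])
    apply hu_span
    have hu_eq : u = lam⁻¹ • dS := by
      apply hΦ_inj
      rw [map_smul, hΦdS, hde, ← hd''def, smul_smul, inv_mul_cancel₀ hlam_ne, one_smul]
    rw [hu_eq]
    exact Submodule.smul_mem _ _ (Submodule.mem_span_singleton_self dS)
  have he_conf : ∀ j, 0 ≤ e j * d j := by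
    intro j
    by_cases hj : d'' j = 0
    · simp [he, hj]
      exact mul_self_nonneg (d j)
    · have hjmem : j ∈ Finset.univ.filter (fun j => d'' j ≠ 0) := by simp [hj]
      have hmin := hj0min j hjmem
      have habs : |lam * d'' j| ≤ |d j| := by
        rw [abs_mul, hlam, abs_div]
        rw [div_mul_eq_mul_div, div_le_iff₀ (by positivity : (0:ℝ) < |d'' j0|)]
        have : |d j0 / d'' j0| ≤ |d j / d'' j| := hmin
        rw [abs_div, abs_div, div_le_div_iff₀ (by positivity) (by positivity)] at this
        linarith [this]
      have key : lam * d'' j * d j ≤ d j * d j := by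
        calc lam * d'' j * d j ≤ |lam * d'' j * d j| := le_abs_self _
          _ = |lam * d'' j| * |d j| := by rw [abs_mul]
          _ ≤ |d j| * |d j| := mul_le_mul_of_nonneg_right habs (abs_nonneg _)
          _ = d j * d j := by rw [← abs_mul, abs_mul_self]
      simp only [he, Pi.sub_apply, Pi.smul_apply, smul_eq_mul]
      nlinarith [key]
  have hsupp := helem e hAe he_ne he_zero he_conf
  have h5 : j0 ∈ Function.support e := by rw [hsupp]; exact hdj0
  exact h5 he0
end

section
/- Let (ξ_k)_{k≥0} be a nonincreasing sequence of nonnegative random variables with ξ_0 a positive constant, and suppose E[ξ_{k+1} | ξ_k] ≤ (1 − 1/c) ξ_k whenever ξ_k ≥ ε, where c > 1 and 0 < ε < ξ_0. Moreover ξ_{k+1} ≤ ξ_k almost surely. Then for any ρ ∈ (0,1) and any integer K ≥ c·log(ξ_0/(ε ρ)), we have Pr(ξ_K ≤ ε) ≥ 1 − ρ. -/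
open MeasureTheory

theorem stmt_16 {Ω : Type*} [MeasurableSpace Ω] (μ : Measure Ω)
    [IsProbabilityMeasure μ]
    (ξ : ℕ → Ω → ℝ) (hmeas : ∀ k, Measurable (ξ k))
    (hint : ∀ k, Integrable (ξ k) μ)
    (hnn : ∀ k ω, 0 ≤ ξ k ω)
    (ξ0 : ℝ) (hξ0 : ∀ ω, ξ 0 ω = ξ0)
    (ε : ℝ) (hε : 0 < ε) (hεξ0 : ε < ξ0)
    (c : ℝ) (hc : 1 < c)
    (hmono : ∀ k, ∀ᵐ ω ∂μ, ξ (k + 1) ω ≤ ξ k ω)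
    (hcontract : ∀ k, ∀ᵐ ω ∂μ, ε ≤ ξ k ω →
      (μ[ξ (k + 1)|MeasurableSpace.comap (ξ k) (borel ℝ)]) ω ≤ (1 - 1 / c) * ξ k ω)
    (ρ : ℝ) (hρ0 : 0 < ρ) (hρ1 : ρ < 1) :
    ∀ K : ℕ, c * Real.log (ξ0 / (ε * ρ)) ≤ K →
      ENNReal.ofReal (1 - ρ) ≤ μ {ω | ξ K ω ≤ ε} := by
  intro K hK
  have hc0 : (0:ℝ) < c := lt_trans one_pos hc
  set r : ℝ := 1 - 1/c with hrdef
  have hinvc0 : (0:ℝ) < 1/c := by positivity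
  have hinvc1 : 1/c < 1 := by rw [div_lt_one hc0]; exact hc
  have hr0 : 0 < r := by simp only [hrdef]; linarith
  have hr1 : r < 1 := by simp only [hrdef]; linarith
  have hξ0pos : 0 < ξ0 := lt_trans hε hεξ0
  set A : ℕ → Set Ω := fun k => {ω | ε ≤ ξ k ω} with hAdef
  have hAmeas : ∀ k, MeasurableSet (A k) :=
    fun k => measurableSet_le measurable_const (hmeas k)
  set Y : ℕ → ℝ := fun k => ∫ ω in A k, ξ k ω ∂μ with hYdef
  have hm : ∀ k, MeasurableSpace.comap (ξ k) (borel ℝ) ≤ ‹MeasurableSpace Ω› := by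
    intro k s hs
    obtain ⟨t, ht, rfl⟩ := hs
    exact hmeas k ht
  -- one-step contraction of Y
  have hstep : ∀ k, Y (k+1) ≤ r * Y k := by
    intro k
    have hAcomap : MeasurableSet[MeasurableSpace.comap (ξ k) (borel ℝ)] (A k) :=
      ⟨Set.Ici ε, measurableSet_Ici, rfl⟩
    have h1 : Y (k+1) ≤ ∫ ω in A k, ξ (k+1) ω ∂μ := by
      simp only [hYdef]
      rw [← integral_indicator (hAmeas (k+1)), ← integral_indicator (hAmeas k)]
      refine integral_mono_ae ((hint (k+1)).indicator (hAmeas (k+1)))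
        ((hint (k+1)).indicator (hAmeas k)) ?_
      filter_upwards [hmono k] with ω hω
      by_cases h : ω ∈ A (k+1)
      · have hk : ω ∈ A k := le_trans h hω
        rw [Set.indicator_of_mem h, Set.indicator_of_mem hk]
      · rw [Set.indicator_of_notMem h]
        exact Set.indicator_nonneg (fun ω' _ => hnn (k+1) ω') ω
    have h2 : ∫ ω in A k, ξ (k+1) ω ∂μ
        = ∫ ω in A k, (μ[ξ (k + 1)|MeasurableSpace.comap (ξ k) (borel ℝ)]) ω ∂μ :=
      (setIntegral_condExp (hm k) (hint (k+1)) hAcomap).symm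
    have h3 : ∫ ω in A k, (μ[ξ (k + 1)|MeasurableSpace.comap (ξ k) (borel ℝ)]) ω ∂μ
        ≤ ∫ ω in A k, r * ξ k ω ∂μ := by
      refine integral_mono_ae (integrable_condExp.restrict) (((hint k).const_mul r).restrict) ?_
      refine (ae_restrict_iff' (hAmeas k)).2 ?_
      filter_upwards [hcontract k] with ω h hmem
      exact h hmem
    have h4 : ∫ ω in A k, r * ξ k ω ∂μ = r * Y k := by
      simp only [hYdef]
      exact integral_const_mul r _
    calc Y (k+1) ≤ ∫ ω in A k, ξ (k+1) ω ∂μ := h1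
      _ = _ := h2
      _ ≤ ∫ ω in A k, r * ξ k ω ∂μ := h3
      _ = r * Y k := h4
  -- base case
  have hY0 : Y 0 ≤ ξ0 := by
    have heq : Y 0 = ∫ ω in A 0, ξ0 ∂μ := by
      show ∫ ω in A 0, ξ 0 ω ∂μ = ∫ ω in A 0, ξ0 ∂μ
      exact integral_congr_ae (Filter.Eventually.of_forall fun ω => hξ0 ω)
    rw [heq, setIntegral_const, smul_eq_mul, measureReal_def]
    have hle1 : (μ (A 0)).toReal ≤ 1 := by
      calc (μ (A 0)).toReal ≤ (μ Set.univ).toReal :=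
            ENNReal.toReal_mono (measure_ne_top μ _)
              (measure_mono (μ := μ) (Set.subset_univ (A 0)))
        _ = 1 := by simp
    nlinarith
  -- induction
  have hYK : ∀ k, Y k ≤ r ^ k * ξ0 := by
    intro k
    induction k with
    | zero => simpa using hY0
    | succ n ih =>
      calc Y (n+1) ≤ r * Y n := hstep n
        _ ≤ r * (r ^ n * ξ0) := by
            exact mul_le_mul_of_nonneg_left ih hr0.le
        _ = r ^ (n+1) * ξ0 := by ring
  -- analytic bound: r ^ K * ξ0 ≤ ε * ρ
  have hlogr : Real.log r ≤ -(1/c) := by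
    have := Real.log_le_sub_one_of_pos hr0
    simp only [hrdef] at this ⊢
    linarith
  have htpos : 0 < ξ0 / (ε * ρ) := by positivity
  have hKc : Real.log (ξ0 / (ε * ρ)) ≤ (K : ℝ) / c := by
    rw [le_div_iff₀ hc0]
    linarith [hK]
  have hrK : r ^ K ≤ ε * ρ / ξ0 := by
    have h1 : r ^ K = Real.exp ((K : ℝ) * Real.log r) := by
      rw [Real.exp_nat_mul, Real.exp_log hr0]
    have h2 : (K : ℝ) * Real.log r ≤ -((K : ℝ)/c) := by
      have := mul_le_mul_of_nonneg_left hlogr (Nat.cast_nonneg K : (0:ℝ) ≤ K)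
      calc (K : ℝ) * Real.log r ≤ (K : ℝ) * (-(1/c)) := this
        _ = -((K : ℝ)/c) := by ring
    have h3 : -((K : ℝ)/c) ≤ -Real.log (ξ0 / (ε * ρ)) := by linarith
    have h4 : Real.exp (-Real.log (ξ0 / (ε * ρ))) = ε * ρ / ξ0 := by
      rw [Real.exp_neg, Real.exp_log htpos]
      field_simp
    calc r ^ K = Real.exp ((K : ℝ) * Real.log r) := h1
      _ ≤ Real.exp (-Real.log (ξ0 / (ε * ρ))) :=
          Real.exp_le_exp.mpr (le_trans h2 h3)
      _ = ε * ρ / ξ0 := h4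
  have hfin : r ^ K * ξ0 ≤ ε * ρ := by
    have := mul_le_mul_of_nonneg_right hrK hξ0pos.le
    calc r ^ K * ξ0 ≤ (ε * ρ / ξ0) * ξ0 := this
      _ = ε * ρ := by field_simp
  -- Markov
  have hmarkov : (μ (A K)).toReal * ε ≤ Y K := by
    have h1 : ∫ ω in A K, ε ∂μ ≤ Y K := by
      simp only [hYdef]
      exact setIntegral_mono_on (integrableOn_const (measure_ne_top μ _))
        ((hint K).integrableOn) (hAmeas K) (fun ω hω => hω)
    rwa [setIntegral_const, smul_eq_mul, measureReal_def] at h1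
  have hAρ : (μ (A K)).toReal ≤ ρ := by
    have h1 : (μ (A K)).toReal * ε ≤ ε * ρ := le_trans hmarkov (le_trans (hYK K) hfin)
    nlinarith
  have hAρ' : μ (A K) ≤ ENNReal.ofReal ρ := by
    calc μ (A K) = ENNReal.ofReal ((μ (A K)).toReal) :=
          (ENNReal.ofReal_toReal (measure_ne_top μ _)).symm
      _ ≤ ENNReal.ofReal ρ := ENNReal.ofReal_le_ofReal hAρ
  have hss : {ω | ε < ξ K ω} ⊆ A K := fun ω (h : ε < ξ K ω) => (le_of_lt h : ε ≤ ξ K ω)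
  have hsub : μ {ω | ε < ξ K ω} ≤ ENNReal.ofReal ρ :=
    le_trans (measure_mono hss) hAρ'
  have hset : {ω | ξ K ω ≤ ε} = {ω | ε < ξ K ω}ᶜ := by
    ext ω; simp [not_lt]
  rw [hset, prob_compl_eq_one_sub (measurableSet_lt measurable_const (hmeas K))]
  have hadd : ENNReal.ofReal (1 - ρ) + ENNReal.ofReal ρ ≤ 1 := by
    rw [← ENNReal.ofReal_add (by linarith) hρ0.le]
    simp
  calc ENNReal.ofReal (1 - ρ) ≤ 1 - ENNReal.ofReal ρ := ENNReal.le_sub_of_add_le_right ENNReal.ofReal_ne_top hadd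
    _ ≤ 1 - μ {ω | ε < ξ K ω} := tsub_le_tsub_left hsub 1
end

section
/- Let f be convex and differentiable with blockwise Lipschitz gradients with constants L_i, and define for a subset 𝒩 of blocks L_𝒩 = Σ_{i∈𝒩} L_i. Then for all x and all d supported on the blocks in 𝒩 (d_i = 0 for i ∉ 𝒩), f(x + d) ≤ f(x) + ⟨∇f(x), d⟩ + (L_𝒩/2)‖d‖². -/
open scoped RealInnerProductSpace

lemma aux1 (φ φ' : ℝ → ℝ) (hφ : ∀ t, HasDerivAt φ (φ' t) t) (C : ℝ)
    (hC : ∀ t ∈ Set.Icc (0:ℝ) 1, φ' t - φ' 0 ≤ C * t) :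
    φ 1 ≤ φ 0 + φ' 0 + C / 2 := by
  set ψ : ℝ → ℝ := fun t => φ t - t * φ' 0 - C * t ^ 2 / 2 with hψ
  have hψd : ∀ t, HasDerivAt ψ (φ' t - φ' 0 - C * t) t := by
    intro t
    have h1 : HasDerivAt (fun t : ℝ => t * φ' 0) (φ' 0) t := by
      simpa using (hasDerivAt_id t).mul_const (φ' 0)
    have h2 : HasDerivAt (fun t : ℝ => C * t ^ 2 / 2) (C * t) t := by
      have := ((hasDerivAt_pow 2 t).const_mul C).div_const 2
      simpa [mul_comm, mul_assoc, mul_div_assoc] using this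
    exact ((hφ t).sub h1).sub h2
  have hanti : AntitoneOn ψ (Set.Icc 0 1) := by
    refine antitoneOn_of_deriv_nonpos (convex_Icc 0 1)
      (fun t _ => (hψd t).differentiableAt.continuousAt.continuousWithinAt)
      (fun t _ => (hψd t).differentiableAt.differentiableWithinAt) ?_
    intro t ht
    rw [(hψd t).deriv]
    have := hC t (Set.mem_Icc_of_Ioo (by simpa using ht))
    linarith
  have := hanti (Set.left_mem_Icc.2 one_pos.le) (Set.right_mem_Icc.2 one_pos.le) one_pos.le
  simp only [hψ] at this
  nlinarith [this]

section Aux2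
variable (N : ℕ) (n : Fin N → ℕ)

lemma Usmul (i : Fin N) (c : ℝ) (h : EuclideanSpace ℝ (Fin (n i))) :
    ((WithLp.equiv 2 (∀ j : Fin N, EuclideanSpace ℝ (Fin (n j)))).symm
      (Function.update (0 : ∀ j : Fin N, EuclideanSpace ℝ (Fin (n j))) i (c • h)))
    = c • (WithLp.equiv 2 _).symm
        (Function.update (0 : ∀ j : Fin N, EuclideanSpace ℝ (Fin (n j))) i h) := by
  ext j
  rcases eq_or_ne j i with rfl | hj
  · simp
  · simp [Function.update_of_ne hj]

lemma innerU (i : Fin N) (h : EuclideanSpace ℝ (Fin (n i)))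
    (a : PiLp 2 (fun i : Fin N => EuclideanSpace ℝ (Fin (n i)))) :
    ⟪a, (WithLp.equiv 2 (∀ j : Fin N, EuclideanSpace ℝ (Fin (n j)))).symm
      (Function.update (0 : ∀ j : Fin N, EuclideanSpace ℝ (Fin (n j))) i h)⟫
    = ⟪(WithLp.equiv 2 _) a i, h⟫ := by
  rw [PiLp.inner_apply, Finset.sum_eq_single i]
  · simp
  · intro j _ hj
    simp [Function.update_of_ne hj]
  · simp

lemma aux2 (L : Fin N → ℝ)
    (f : PiLp 2 (fun i : Fin N => EuclideanSpace ℝ (Fin (n i))) → ℝ)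
    (hdiff : Differentiable ℝ f)
    (hblock : ∀ (i : Fin N) (x : PiLp 2 (fun i : Fin N => EuclideanSpace ℝ (Fin (n i))))
      (h : EuclideanSpace ℝ (Fin (n i))),
      ‖(WithLp.equiv 2 _) (gradient f
          (x + (WithLp.equiv 2 _).symm
            (Function.update (0 : ∀ j : Fin N, EuclideanSpace ℝ (Fin (n j))) i h))) i -
        (WithLp.equiv 2 _) (gradient f x) i‖ ≤ L i * ‖h‖)
    (i : Fin N) (x : PiLp 2 (fun i : Fin N => EuclideanSpace ℝ (Fin (n i))))
    (h : EuclideanSpace ℝ (Fin (n i))) :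
    f (x + (WithLp.equiv 2 _).symm
        (Function.update (0 : ∀ j : Fin N, EuclideanSpace ℝ (Fin (n j))) i h))
      ≤ f x + ⟪gradient f x, (WithLp.equiv 2 _).symm
        (Function.update (0 : ∀ j : Fin N, EuclideanSpace ℝ (Fin (n j))) i h)⟫
        + L i / 2 * ‖h‖ ^ 2 := by
  set v : PiLp 2 (fun i : Fin N => EuclideanSpace ℝ (Fin (n i))) :=
    (WithLp.equiv 2 _).symm (Function.update 0 i h) with hv
  have hderiv : ∀ t : ℝ, HasDerivAt (fun t : ℝ => f (x + t • v))
      ⟪gradient f (x + t • v), v⟫ t := by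
    intro t
    have hy : HasDerivAt (fun t : ℝ => x + t • v) v t := by
      simpa using ((hasDerivAt_id t).smul_const v).const_add x
    simpa [Function.comp_def] using ((hdiff (x + t • v)).hasGradientAt.hasFDerivAt.comp_hasDerivAt t hy)
  have hbnd : ∀ t ∈ Set.Icc (0:ℝ) 1,
      ⟪gradient f (x + t • v), v⟫ - ⟪gradient f (x + (0:ℝ) • v), v⟫
        ≤ (L i * ‖h‖ ^ 2) * t := by
    intro t ht
    rw [hv, innerU, innerU]
    have h0 : x + (0:ℝ) • v = x := by simp
    rw [h0]
    have := hblock i x (t • h)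
    rw [Usmul, ← hv] at this
    calc ⟪(WithLp.equiv 2 _) (gradient f (x + t • v)) i, h⟫ - ⟪(WithLp.equiv 2 _) (gradient f x) i, h⟫
        = ⟪(WithLp.equiv 2 _) (gradient f (x + t • v)) i - (WithLp.equiv 2 _) (gradient f x) i, h⟫ := by
          rw [inner_sub_left]
      _ ≤ ‖(WithLp.equiv 2 _) (gradient f (x + t • v)) i - (WithLp.equiv 2 _) (gradient f x) i‖ * ‖h‖ :=
          real_inner_le_norm _ _
      _ ≤ (L i * ‖t • h‖) * ‖h‖ := by
          apply mul_le_mul_of_nonneg_right this (norm_nonneg _)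
      _ = (L i * ‖h‖ ^ 2) * t := by
          rw [norm_smul, Real.norm_eq_abs, abs_of_nonneg ht.1]; ring
  have key := aux1 (fun t : ℝ => f (x + t • v))
    (fun t : ℝ => ⟪gradient f (x + t • v), v⟫) hderiv (L i * ‖h‖ ^ 2) hbnd
  simp only [one_smul, zero_smul, add_zero] at key
  calc f (x + v) ≤ f x + ⟪gradient f x, v⟫ + L i * ‖h‖ ^ 2 / 2 := key
    _ = f x + ⟪gradient f x, v⟫ + L i / 2 * ‖h‖ ^ 2 := by ring

end Aux2

lemma piLp_sum_apply {N : ℕ} {n : Fin N → ℕ} {ι : Type*}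
    (s : Finset ι) (g : ι → PiLp 2 (fun i : Fin N => EuclideanSpace ℝ (Fin (n i)))) (j : Fin N) :
    (∑ i ∈ s, g i) j = ∑ i ∈ s, g i j := by
  classical
  induction s using Finset.induction_on with
  | empty => simp [PiLp.zero_apply]
  | insert a t hji ih => simp [Finset.sum_insert hji, PiLp.add_apply, ih]

theorem stmt_18 (N : ℕ) (n : Fin N → ℕ) (L : Fin N → ℝ) (hL : ∀ i, 0 < L i)
    (f : PiLp 2 (fun i : Fin N => EuclideanSpace ℝ (Fin (n i))) → ℝ)
    (hconv : ConvexOn ℝ Set.univ f) (hdiff : Differentiable ℝ f)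
    (hblock : ∀ (i : Fin N) (x : PiLp 2 (fun i : Fin N => EuclideanSpace ℝ (Fin (n i))))
      (h : EuclideanSpace ℝ (Fin (n i))),
      ‖(WithLp.equiv 2 _) (gradient f
          (x + (WithLp.equiv 2 _).symm
            (Function.update (0 : ∀ j : Fin N, EuclideanSpace ℝ (Fin (n j))) i h))) i -
        (WithLp.equiv 2 _) (gradient f x) i‖ ≤ L i * ‖h‖)
    (𝒩 : Finset (Fin N)) :
    ∀ x d : PiLp 2 (fun i : Fin N => EuclideanSpace ℝ (Fin (n i))),
      (∀ i ∉ 𝒩, (WithLp.equiv 2 _) d i = 0) →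
      f (x + d) ≤ f x + ⟪gradient f x, d⟫ + (∑ i ∈ 𝒩, L i) / 2 * ‖d‖ ^ 2 := by
  intro x d hd
  set U : ∀ i : Fin N, EuclideanSpace ℝ (Fin (n i)) →
      PiLp 2 (fun i : Fin N => EuclideanSpace ℝ (Fin (n i))) :=
    fun i h => (WithLp.equiv 2 _).symm
      (Function.update (0 : ∀ j : Fin N, EuclideanSpace ℝ (Fin (n j))) i h) with hU
  rcases Finset.eq_empty_or_nonempty 𝒩 with rfl | hne
  · have hd0 : d = 0 := by
      ext j k
      have := hd j (Finset.notMem_empty j)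
      have : d j = 0 := this
      simp [this]
    subst hd0
    simp
  set S := ∑ i ∈ 𝒩, L i with hS
  have hSpos : 0 < S := Finset.sum_pos (fun i _ => hL i) hne
  set D : ∀ i : Fin N, EuclideanSpace ℝ (Fin (n i)) := fun i => (WithLp.equiv 2 _) d i with hD
  have hsum : ∑ i ∈ 𝒩, U i (D i) = d := by
    refine PiLp.ext fun j => ?_
    rw [piLp_sum_apply 𝒩 (fun i => U i (D i)) j]
    rcases Finset.decidableMem j 𝒩 with hj | hj
    · have : ∀ i ∈ 𝒩, U i (D i) j = 0 := by
        intro i _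
        have hij : j ≠ i := fun e => hj (e ▸ ‹i ∈ 𝒩›)
        simp [hU, Function.update_of_ne hij]
      rw [Finset.sum_eq_zero this]
      exact (hd j hj).symm
    · rw [Finset.sum_eq_single j]
      · simp [hU, hD]
      · intro i _ hij
        simp [hU, Function.update_of_ne (Ne.symm hij)]
      · exact fun h => absurd hj h
  have hw0 : ∀ i ∈ 𝒩, (0:ℝ) ≤ L i / S := fun i _ => div_nonneg (hL i).le hSpos.le
  have hw1 : ∑ i ∈ 𝒩, L i / S = 1 := by
    rw [← Finset.sum_div, ← hS]
    field_simp
  set z : Fin N → PiLp 2 (fun i : Fin N => EuclideanSpace ℝ (Fin (n i))) :=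
    fun i => x + (S / L i) • U i (D i) with hz
  have hcomb : ∑ i ∈ 𝒩, (L i / S) • z i = x + d := by
    simp only [hz, smul_add]
    rw [Finset.sum_add_distrib]
    congr 1
    · rw [← Finset.sum_smul, hw1, one_smul]
    · rw [← hsum]
      apply Finset.sum_congr rfl
      intro i hi
      have h1 : (L i / S) * (S / L i) = 1 := by
        field_simp [(hL i).ne', hSpos.ne']
      rw [smul_smul, h1, one_smul]
  have hjensen := hconv.map_sum_le hw0 hw1 (fun i _ => Set.mem_univ (z i))
  rw [hcomb] at hjensen
  have hblockbd : ∀ i ∈ 𝒩, (L i / S) * f (z i) ≤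
      (L i / S) * f x + ⟪gradient f x, U i (D i)⟫ + S / 2 * ‖D i‖ ^ 2 := by
    intro i hi
    have h2 := aux2 N n L f hdiff hblock i x ((S / L i) • D i)
    simp only [Usmul] at h2
    have hinner : ⟪gradient f x, (S / L i) • U i (D i)⟫ =
        (S / L i) * ⟪gradient f x, U i (D i)⟫ := real_inner_smul_right _ _ _
    have hnrm : ‖(S / L i) • D i‖ ^ 2 = (S / L i) ^ 2 * ‖D i‖ ^ 2 := by
      rw [norm_smul, Real.norm_eq_abs, mul_pow, sq_abs]
    rw [hinner, hnrm] at h2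
    have hLi := hL i
    calc (L i / S) * f (z i)
        ≤ (L i / S) * (f x + (S / L i) * ⟪gradient f x, U i (D i)⟫
            + L i / 2 * ((S / L i) ^ 2 * ‖D i‖ ^ 2)) :=
          mul_le_mul_of_nonneg_left h2 (hw0 i hi)
      _ = (L i / S) * f x + ⟪gradient f x, U i (D i)⟫ + S / 2 * ‖D i‖ ^ 2 := by
          field_simp
  have hnorm : ∑ i ∈ 𝒩, ‖D i‖ ^ 2 = ‖d‖ ^ 2 := by
    rw [PiLp.norm_sq_eq_of_L2]
    apply Finset.sum_subset (Finset.subset_univ 𝒩)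
    intro i _ hi
    have h0 : D i = 0 := hd i hi
    rw [h0]
    simp
  calc f (x + d) ≤ ∑ i ∈ 𝒩, (L i / S) * f (z i) := hjensen
    _ ≤ ∑ i ∈ 𝒩, ((L i / S) * f x + ⟪gradient f x, U i (D i)⟫ + S / 2 * ‖D i‖ ^ 2) :=
        Finset.sum_le_sum hblockbd
    _ = f x + ⟪gradient f x, d⟫ + S / 2 * ‖d‖ ^ 2 := by
        rw [Finset.sum_add_distrib, Finset.sum_add_distrib]
        congr 1
        · congr 1
          · rw [← Finset.sum_mul, hw1, one_mul]
          · rw [← inner_sum, hsum]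
        · rw [← Finset.mul_sum, hnorm]
end
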